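/- Let G be a finite connected cactus graph. Then G has an independent [1,2]-set if and only if there exist a spanning tree T of G and an independent [1,2]-set S of T such that every edge e = uv of G that is not an edge of T satisfies one of the following (after possibly swapping u and v): (type A) both u ∉ S and v ∉ S; or (type B) v ∈ S, u ∉ S, u has exactly one neighbor in S with respect to the tree T, and u and v lie in the same connected component of the forest obtained from T by deleting every edge of T both of whose endpoints lie outside S. -/

import Mathlib

/-- A set of vertices is independent: no two of its vertices are adjacent. -/
def IndepSet {V : Type*} (G : SimpleGraph V) (S : Set V) : Prop :=
  ∀ u ∈ S, ∀ w ∈ S, ¬ G.Adj u w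

/-- An independent [1,2]-set: an independent set such that every vertex outside it
has at least one and at most two neighbors in it. -/
def IsInd12Set {V : Type*} (G : SimpleGraph V) (S : Set V) : Prop :=
  IndepSet G S ∧
    ∀ u ∉ S, 1 ≤ (S ∩ G.neighborSet u).ncard ∧ (S ∩ G.neighborSet u).ncard ≤ 2

/-- The forest obtained from `T` by deleting every edge of `T` both of whose
endpoints lie outside `S`. -/
def forestOf {V : Type*} (T : SimpleGraph V) (S : Set V) : SimpleGraph V where
  Adj a b := T.Adj a b ∧ (a ∈ S ∨ b ∈ S)
  symm := ⟨fun _ _ h => ⟨h.1.symm, h.2.symm⟩⟩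
  loopless := ⟨fun a h => T.loopless.irrefl a h.1⟩

/-- Type B condition for the ordered pair (u, v) with respect to tree `T` and set `S`. -/
def TypeB {V : Type*} (T : SimpleGraph V) (S : Set V) (u v : V) : Prop :=
  v ∈ S ∧ u ∉ S ∧ (S ∩ T.neighborSet u).ncard = 1 ∧ (forestOf T S).Reachable u v

/-- A cactus graph: a connected graph in which every edge belongs to at most one cycle,
i.e. any two cycles sharing an edge have the same edge set. -/
def IsCactus {V : Type*} (G : SimpleGraph V) : Prop :=
  G.Connected ∧
    ∀ ⦃a b : V⦄ (p : G.Walk a a) (q : G.Walk b b), p.IsCycle → q.IsCycle →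
      ∀ e ∈ p.edges, e ∈ q.edges → ∀ e' : Sym2 V, e' ∈ p.edges ↔ e' ∈ q.edges

open SimpleGraph Walk

namespace Ind12Aux

variable {V : Type*}

lemma edges_eq_cons {G : SimpleGraph V} {a b : V} (p : G.Walk a b) (hp : ¬ p.Nil) :
    p.edges = s(a, p.getVert 1) :: p.tail.edges := by
  conv_lhs => rw [← Walk.cons_tail_eq p hp]
  rw [Walk.edges_cons]

lemma first_edge_mem {G : SimpleGraph V} {a b : V} (p : G.Walk a b) (hp : ¬ p.Nil) :
    s(a, p.getVert 1) ∈ p.edges := by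
  rw [edges_eq_cons p hp]; exact List.mem_cons_self

/-- If every edge of a connected graph minus an edge keeps its endpoints reachable,
connectivity is preserved. -/
lemma connected_deleteEdge {G : SimpleGraph V} (hG : G.Connected) {x y : V}
    (hxy : (G.deleteEdges {s(x, y)}).Reachable x y) :
    (G.deleteEdges {s(x, y)}).Connected := by
  rw [connected_iff] at hG ⊢
  refine ⟨fun a b => ?_, hG.2⟩
  obtain ⟨p⟩ := hG.1 a b
  induction p with
  | nil => exact Reachable.refl _
  | cons h q ih =>
    refine Reachable.trans ?_ ih
    rename_i a' c' b'
    by_cases he : s(a', c') = s(x, y)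
    · rw [Sym2.eq_iff] at he
      rcases he with ⟨rfl, rfl⟩ | ⟨rfl, rfl⟩
      · exact hxy
      · exact hxy.symm
    · exact Adj.reachable (by simp [SimpleGraph.deleteEdges_adj, h, he])

/-- Chain reachability in the forest along a walk whose edges all have an endpoint in `S`. -/
lemma forest_reach_of_walk {H F : SimpleGraph V} {S : Set V}
    (hloc : ∀ x y, H.Adj x y → (x ∈ S ∨ y ∈ S) → F.Reachable x y) :
    ∀ {a b : V} (p : H.Walk a b), (∀ x y, s(x, y) ∈ p.edges → x ∈ S ∨ y ∈ S) →
      F.Reachable a b := by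
  intro a b p
  induction p with
  | nil => exact fun _ => Reachable.refl _
  | cons h q ih =>
    intro hS
    rename_i a' c' b'
    refine Reachable.trans (hloc _ _ h (hS a' c' ?_)) (ih fun x y hxy => hS x y ?_)
    · rw [Walk.edges_cons]; exact List.mem_cons_self
    · rw [Walk.edges_cons]; exact List.mem_cons_of_mem _ hxy

/-- The forward direction, proved for all connected graphs by induction on the
number of edges. -/
lemma fwd [Fintype V] :
    ∀ (n : ℕ) (G : SimpleGraph V), G.edgeSet.ncard ≤ n → G.Connected →
      ∀ S : Set V, IsInd12Set G S →
      ∃ T : SimpleGraph V, T ≤ G ∧ T.IsTree ∧ IsInd12Set T S ∧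
        ∀ u v : V, G.Adj u v → ¬ T.Adj u v →
          ((u ∉ S ∧ v ∉ S) ∨ TypeB T S u v ∨ TypeB T S v u) := by
  intro n
  induction n using Nat.strong_induction_on with
  | _ n ih =>
  intro G hcard hG S hS
  classical
  by_cases hac : G.IsAcyclic
  · exact ⟨G, le_refl G, ⟨hG, hac⟩, hS, fun u v h h' => absurd h h'⟩
  simp only [SimpleGraph.IsAcyclic] at hac
  push_neg at hac
  obtain ⟨a, p, hp⟩ := hac
  by_cases hA : ∃ x y, s(x, y) ∈ p.edges ∧ x ∉ S ∧ y ∉ S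
  · -- delete a type-A edge of the cycle
    obtain ⟨x, y, hmem, hxS, hyS⟩ := hA
    have hadj : G.Adj x y := p.adj_of_mem_edges hmem
    set H := G.deleteEdges {s(x, y)} with hH
    have hHreach : H.Reachable x y :=
      ((adj_and_reachable_delete_edges_iff_exists_cycle).2 ⟨a, p, hp, hmem⟩).2
    have hHconn : H.Connected := connected_deleteEdge hG hHreach
    have hlt : H.edgeSet.ncard < G.edgeSet.ncard := by
      rw [hH, SimpleGraph.edgeSet_deleteEdges]
      exact Set.ncard_diff_singleton_lt_of_mem hadj (Set.toFinite _)
    have hne : ∀ w, S ∩ H.neighborSet w = S ∩ G.neighborSet w := by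
      intro w
      ext z
      simp only [Set.mem_inter_iff, SimpleGraph.mem_neighborSet, hH,
        SimpleGraph.deleteEdges_adj, Set.mem_singleton_iff]
      constructor
      · rintro ⟨hz, hadj', _⟩; exact ⟨hz, hadj'⟩
      · rintro ⟨hz, hadj'⟩
        refine ⟨hz, hadj', fun hcontra => ?_⟩
        rw [Sym2.eq_iff] at hcontra
        rcases hcontra with ⟨rfl, rfl⟩ | ⟨rfl, rfl⟩
        · exact hyS hz
        · exact hxS hz
    have hSH : IsInd12Set H S := by
      refine ⟨fun u hu w hw hadj' => hS.1 u hu w hw hadj'.1, fun u hu => ?_⟩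
      rw [hne u]; exact hS.2 u hu
    obtain ⟨T, hTH, hTree, hTS, hcond⟩ :=
      ih H.edgeSet.ncard (lt_of_lt_of_le hlt hcard) H (le_refl _) hHconn S hSH
    refine ⟨T, hTH.trans (SimpleGraph.deleteEdges_le _), hTree, hTS, fun u v huv hTuv => ?_⟩
    by_cases hHa : H.Adj u v
    · exact hcond u v hHa hTuv
    · have heq : s(u, v) = s(x, y) := by
        by_contra hne'
        exact hHa (by simp [hH, SimpleGraph.deleteEdges_adj, huv, hne'])
      rw [Sym2.eq_iff] at heq
      rcases heq with ⟨rfl, rfl⟩ | ⟨rfl, rfl⟩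
      · exact Or.inl ⟨hxS, hyS⟩
      · exact Or.inl ⟨hyS, hxS⟩
  · -- every edge of the cycle has an endpoint in S
    push_neg at hA
    -- find u on the cycle, u ∉ S
    have hu_ex : ∃ u ∈ p.support, u ∉ S := by
      by_contra hall
      push_neg at hall
      have hnn := hp.not_nil
      have hadj1 := Walk.adj_snd (p := p) hnn
      have hmem1 : s(a, p.getVert 1) ∈ p.edges := first_edge_mem p hnn
      exact hS.1 a (hall _ p.start_mem_support) _
        (hall _ (p.snd_mem_support_of_mem_edges hmem1)) hadj1
    obtain ⟨u, hu_sup, huS⟩ := hu_ex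
    set q := p.rotate u hu_sup with hq_def
    have hq : q.IsCycle := hp.rotate hu_sup
    have hq_edges : ∀ e, e ∈ q.edges ↔ e ∈ p.edges := fun e =>
      (Walk.rotate_edges p u hu_sup).mem_iff
    have hqn : ¬ q.Nil := hq.not_nil
    set b := q.getVert 1 with hb_def
    have hadj_ub : G.Adj u b := Walk.adj_snd (p := q) hqn
    have hub_mem : s(u, b) ∈ q.edges := first_edge_mem q hqn
    have hbS : b ∈ S := hA u b ((hq_edges _).1 hub_mem) huS
    -- decompose the cycle
    have hq' : (Walk.cons hadj_ub q.tail).IsCycle := by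
      rw [← Walk.cons_tail_eq q hqn] at hq; exact hq
    rw [Walk.cons_isCycle_iff] at hq'
    -- the other S-neighbor c of u on the cycle
    set r := q.tail.reverse with hr_def
    have hub : u ≠ b := fun h => huS (h ▸ hbS)
    have hrn : ¬ r.Nil := Walk.not_nil_of_ne hub
    set c := r.getVert 1 with hc_def
    have hadj_uc : G.Adj u c := Walk.adj_snd (p := r) hrn
    have hmem_r : s(u, c) ∈ r.edges := first_edge_mem r hrn
    have hmem_tail : s(u, c) ∈ q.tail.edges := by
      rw [hr_def, Walk.edges_reverse, List.mem_reverse] at hmem_r; exact hmem_r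
    have hmem_q : s(u, c) ∈ q.edges := by
      rw [edges_eq_cons q hqn]; exact List.mem_cons_of_mem _ hmem_tail
    have hcS : c ∈ S := hA u c ((hq_edges _).1 hmem_q) huS
    have hbc : b ≠ c := by
      intro h
      have hsym : s(u, b) = s(u, c) := by rw [h]
      exact hq'.2 (by rw [hsym]; exact hmem_tail)
    -- the G-neighborhood of u in S is exactly {b, c}
    have hpair : ({b, c} : Set V) = S ∩ G.neighborSet u := by
      refine Set.eq_of_subset_of_ncard_le ?_ ?_ (Set.toFinite _)
      · rintro z (rfl | rfl)
        · exact ⟨hbS, hadj_ub⟩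
        · exact ⟨hcS, hadj_uc⟩
      · calc (S ∩ G.neighborSet u).ncard ≤ 2 := (hS.2 u huS).2
          _ = ({b, c} : Set V).ncard := (Set.ncard_pair hbc).symm
    -- delete the edge s(u, b)
    set H := G.deleteEdges {s(u, b)} with hH
    have hHreach : H.Reachable u b :=
      ((adj_and_reachable_delete_edges_iff_exists_cycle).2
        ⟨a, p, hp, (hq_edges _).1 hub_mem⟩).2
    have hHconn : H.Connected := connected_deleteEdge hG hHreach
    have hlt : H.edgeSet.ncard < G.edgeSet.ncard := by
      rw [hH, SimpleGraph.edgeSet_deleteEdges]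
      exact Set.ncard_diff_singleton_lt_of_mem hadj_ub (Set.toFinite _)
    have hnbu : S ∩ H.neighborSet u = {c} := by
      ext z
      simp only [Set.mem_inter_iff, SimpleGraph.mem_neighborSet, hH,
        SimpleGraph.deleteEdges_adj, Set.mem_singleton_iff]
      constructor
      · rintro ⟨hz, hadj', hnsym⟩
        have hz2 : z ∈ ({b, c} : Set V) := hpair ▸ ⟨hz, hadj'⟩
        rcases hz2 with h | h
        · exact absurd (by rw [h]) hnsym
        · exact h
      · intro hz
        refine ⟨by rw [hz]; exact hcS, by rw [hz]; exact hadj_uc, fun hcontra => ?_⟩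
        rw [Sym2.eq_iff] at hcontra
        rcases hcontra with ⟨-, h1⟩ | ⟨h1, -⟩
        · exact hbc (by rw [← h1, hz])
        · exact huS (by rw [h1]; exact hbS)
    have hnbw : ∀ w, w ≠ u → S ∩ H.neighborSet w = S ∩ G.neighborSet w := by
      intro w hw
      ext z
      simp only [Set.mem_inter_iff, SimpleGraph.mem_neighborSet, hH,
        SimpleGraph.deleteEdges_adj, Set.mem_singleton_iff]
      constructor
      · rintro ⟨hz, hadj', _⟩; exact ⟨hz, hadj'⟩
      · rintro ⟨hz, hadj'⟩
        refine ⟨hz, hadj', fun hcontra => ?_⟩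
        rw [Sym2.eq_iff] at hcontra
        rcases hcontra with ⟨h1, -⟩ | ⟨-, h2⟩
        · exact hw h1
        · exact huS (by rw [← h2]; exact hz)
    have hSH : IsInd12Set H S := by
      refine ⟨fun u' hu' w hw hadj' => hS.1 u' hu' w hw hadj'.1, fun w hw => ?_⟩
      by_cases hwu : w = u
      · subst hwu
        rw [hnbu, Set.ncard_singleton]
        omega
      · rw [hnbw w hwu]; exact hS.2 w hw
    obtain ⟨T, hTH, hTree, hTS, hcond⟩ :=
      ih H.edgeSet.ncard (lt_of_lt_of_le hlt hcard) H (le_refl _) hHconn S hSH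
    -- reachability in the forest
    have hloc : ∀ x y, H.Adj x y → (x ∈ S ∨ y ∈ S) → (forestOf T S).Reachable x y := by
      intro x y hxy hxyS
      by_cases hT : T.Adj x y
      · exact Adj.reachable ⟨hT, hxyS⟩
      · rcases hcond x y hxy hT with ⟨hx, hy⟩ | hB | hB
        · rcases hxyS with h | h
          · exact absurd h hx
          · exact absurd h hy
        · exact hB.2.2.2
        · exact hB.2.2.2.symm
    -- the walk b → u along the rest of the cycle, inside H
    have htail_sub : ∀ e ∈ q.tail.edges, e ∈ H.edgeSet := by
      intro e he
      rw [hH, SimpleGraph.edgeSet_deleteEdges]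
      refine ⟨q.tail.edges_subset_edgeSet he, ?_⟩
      simp only [Set.mem_singleton_iff]
      intro hcontra
      exact hq'.2 (hcontra ▸ he)
    set W : H.Walk b u := q.tail.transfer H htail_sub with hW_def
    have hW_edges : W.edges = q.tail.edges := Walk.edges_transfer _ _
    have hreach_bu : (forestOf T S).Reachable b u := by
      refine forest_reach_of_walk hloc W ?_
      intro x y hxy
      rw [hW_edges] at hxy
      have : s(x, y) ∈ p.edges := (hq_edges _).1 (by
        rw [edges_eq_cons q hqn]; exact List.mem_cons_of_mem _ hxy)
      by_cases hx : x ∈ S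
      · exact Or.inl hx
      · exact Or.inr (hA x y this hx)
    have hTcount : (S ∩ T.neighborSet u).ncard = 1 := by
      have hsub : S ∩ T.neighborSet u ⊆ ({c} : Set V) := by
        rw [← hnbu]
        exact fun z ⟨h1, h2⟩ => ⟨h1, hTH h2⟩
      have h1 : (S ∩ T.neighborSet u).ncard ≤ 1 := by
        calc (S ∩ T.neighborSet u).ncard ≤ ({c} : Set V).ncard :=
              Set.ncard_le_ncard hsub (Set.toFinite _)
          _ = 1 := Set.ncard_singleton c
      have h2 : 1 ≤ (S ∩ T.neighborSet u).ncard := (hTS.2 u huS).1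
      omega
    have hTypeB : TypeB T S u b := ⟨hbS, huS, hTcount, hreach_bu.symm⟩
    refine ⟨T, hTH.trans (SimpleGraph.deleteEdges_le _), hTree, hTS, fun u' v' huv hTuv => ?_⟩
    by_cases hHa : H.Adj u' v'
    · exact hcond u' v' hHa hTuv
    · have heq : s(u', v') = s(u, b) := by
        by_contra hne'
        exact hHa (by simp [hH, SimpleGraph.deleteEdges_adj, huv, hne'])
      rw [Sym2.eq_iff] at heq
      rcases heq with ⟨rfl, rfl⟩ | ⟨rfl, rfl⟩
      · exact Or.inr (Or.inl hTypeB)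
      · exact Or.inr (Or.inr hTypeB)

end Ind12Aux


theorem statement1 {V : Type*} [Fintype V] (G : SimpleGraph V) (hcactus : IsCactus G) :
    (∃ S : Set V, IsInd12Set G S) ↔
      ∃ (T : SimpleGraph V) (S : Set V), T ≤ G ∧ T.IsTree ∧ IsInd12Set T S ∧
        ∀ u v : V, G.Adj u v → ¬ T.Adj u v →
          ((u ∉ S ∧ v ∉ S) ∨ TypeB T S u v ∨ TypeB T S v u) := by
  classical
  constructor
  · rintro ⟨S, hS⟩
    obtain ⟨T, h1, h2, h3, h4⟩ :=
      Ind12Aux.fwd G.edgeSet.ncard G (le_refl _) hcactus.1 S hS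
    exact ⟨T, S, h1, h2, h3, h4⟩
  · rintro ⟨T, S, hle, htree, hTS, hcond⟩
    refine ⟨S, ?_, ?_⟩
    · -- independence in G
      intro x hx y hy hadj
      by_cases hT : T.Adj x y
      · exact hTS.1 x hx y hy hT
      · rcases hcond x y hadj hT with ⟨h1, _⟩ | hB | hB
        · exact h1 hx
        · exact hB.2.1 hx
        · exact hB.2.1 hy
    · -- degree conditions in G
      intro u huS
      have hsub : S ∩ T.neighborSet u ⊆ S ∩ G.neighborSet u :=
        fun z ⟨h1, h2⟩ => ⟨h1, hle h2⟩
      have hlow : 1 ≤ (S ∩ G.neighborSet u).ncard :=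
        le_trans (hTS.2 u huS).1 (Set.ncard_le_ncard hsub (Set.toFinite _))
      refine ⟨hlow, ?_⟩
      set A := S ∩ T.neighborSet u with hA_def
      set B := {z | z ∈ S ∧ G.Adj u z ∧ ¬ T.Adj u z} with hB_def
      have hunion : S ∩ G.neighborSet u = A ∪ B := by
        ext z
        simp only [hA_def, hB_def, Set.mem_inter_iff, SimpleGraph.mem_neighborSet,
          Set.mem_union, Set.mem_setOf_eq]
        constructor
        · rintro ⟨hz, hadj⟩
          by_cases hT : T.Adj u z
          · exact Or.inl ⟨hz, hT⟩
          · exact Or.inr ⟨hz, hadj, hT⟩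
        · rintro (⟨hz, hT⟩ | ⟨hz, hadj, _⟩)
          · exact ⟨hz, hle hT⟩
          · exact ⟨hz, hadj⟩
      have hdisj : Disjoint A B := by
        rw [Set.disjoint_left]
        rintro z ⟨_, hT⟩ ⟨_, _, hnT⟩
        exact hnT hT
      rw [hunion, Set.ncard_union_eq hdisj (Set.toFinite _) (Set.toFinite _)]
      -- helper: every nontree S-edge at u is type B for (u, ·)
      have hgetB : ∀ v ∈ B, TypeB T S u v := by
        rintro v ⟨hvS, hadj, hnT⟩
        rcases hcond u v hadj hnT with ⟨_, h2⟩ | hB | hB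
        · exact absurd hvS h2
        · exact hB
        · exact absurd hvS hB.2.1
      rcases B.eq_empty_or_nonempty with hBe | ⟨v, hv⟩
      · rw [hBe, Set.ncard_empty]
        have h2 := (hTS.2 u huS).2
        rw [← hA_def] at h2
        omega
      · have hB1 : TypeB T S u v := hgetB v hv
        have hA1 : A.ncard = 1 := hB1.2.2.1
        have hBle : B.ncard ≤ 1 := by
          rw [Set.ncard_le_one (Set.toFinite _)]
          intro v1 hv1 v2 hv2
          by_contra hne
          have hB1 := hgetB v1 hv1
          have hB2 := hgetB v2 hv2
          obtain ⟨w0, hw0⟩ := Set.ncard_eq_one.1 hB1.2.2.1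
          set F := forestOf T S with hF_def
          have hFT : ∀ {x y : V}, F.Adj x y → T.Adj x y := fun {x y} h => (h : T.Adj x y ∧ (x ∈ S ∨ y ∈ S)).1
          have hFadj_u : ∀ z, F.Adj u z → z = w0 := by
            intro z hz
            have hzA : z ∈ A := ⟨(hz : T.Adj u z ∧ (u ∈ S ∨ z ∈ S)).2.resolve_left huS, (hz : T.Adj u z ∧ (u ∈ S ∨ z ∈ S)).1⟩
            rw [hA_def, hw0] at hzA
            exact hzA
          -- build the two cycles
          have mkCycle : ∀ v' : V, v' ∈ B → F.Reachable u v' →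
              ∃ (C : G.Walk u u), C.IsCycle ∧ s(u, w0) ∈ C.edges ∧ s(u, v') ∈ C.edges ∧
                ∀ e ∈ C.edges, e ≠ s(u, v') → e ∈ T.edgeSet := by
            rintro v' ⟨hv'S, hadj', hnT'⟩ hreach
            obtain ⟨P⟩ := hreach.symm
            set P1 := P.toPath with hP1_def
            have hedges_sub : ∀ e ∈ (P1 : F.Walk v' u).edges, e ∈ G.edgeSet := by
              intro e he
              have : e ∈ F.edgeSet := (P1 : F.Walk v' u).edges_subset_edgeSet he
              exact (SimpleGraph.edgeSet_mono (fun _ _ h => hle (hFT h))) this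
            set W1 : G.Walk v' u := (P1 : F.Walk v' u).transfer G hedges_sub with hW1_def
            have hW1_edges : W1.edges = (P1 : F.Walk v' u).edges := Walk.edges_transfer _ _
            have hW1_path : W1.IsPath := Walk.IsPath.transfer _ P1.2
            have hnotmem : s(u, v') ∉ W1.edges := by
              rw [hW1_edges]
              intro hmem
              have : F.Adj u v' := (P1 : F.Walk v' u).adj_of_mem_edges hmem
              exact hnT' (hFT this)
            have hC : (Walk.cons hadj' (W1 : G.Walk v' u)).IsCycle :=
              SimpleGraph.Path.cons_isCycle ⟨W1, hW1_path⟩ hadj' hnotmem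
            refine ⟨Walk.cons hadj' W1, hC, ?_, ?_, ?_⟩
            · -- s(u, w0) is the first edge of P1.reverse
              have hune : u ≠ v' := fun h => huS (h ▸ hv'S)
              have hPn : ¬ (P1 : F.Walk v' u).reverse.Nil :=
                Walk.not_nil_of_ne hune
              have hfm : s(u, (P1 : F.Walk v' u).reverse.getVert 1) ∈
                  (P1 : F.Walk v' u).reverse.edges := Ind12Aux.first_edge_mem _ hPn
              have hz := hFadj_u ((P1 : F.Walk v' u).reverse.getVert 1) (Walk.adj_snd (p := (P1 : F.Walk v' u).reverse) hPn)
              rw [hz] at hfm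
              rw [Walk.edges_reverse, List.mem_reverse] at hfm
              rw [Walk.edges_cons]
              exact List.mem_cons_of_mem _ (hW1_edges ▸ hfm)
            · rw [Walk.edges_cons]; exact List.mem_cons_self
            · intro e he hene
              rw [Walk.edges_cons] at he
              rcases List.mem_cons.mp he with he | he
              · exact absurd he hene
              · rw [hW1_edges] at he
                have : e ∈ F.edgeSet := (P1 : F.Walk v' u).edges_subset_edgeSet he
                exact SimpleGraph.edgeSet_mono (fun _ _ h => hFT h) this
          obtain ⟨C1, hC1, hC1w0, hC1v, hC1T⟩ := mkCycle v1 hv1 hB1.2.2.2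
          obtain ⟨C2, hC2, hC2w0, hC2v, hC2T⟩ := mkCycle v2 hv2 hB2.2.2.2
          have hsame := hcactus.2 C1 C2 hC1 hC2 s(u, w0) hC1w0 hC2w0
          have hmem2 : s(u, v1) ∈ C2.edges := (hsame s(u, v1)).1 hC1v
          have hne12 : s(u, v1) ≠ s(u, v2) := by
            intro h
            rw [Sym2.eq_iff] at h
            rcases h with ⟨-, h⟩ | ⟨h1, h2⟩
            · exact hne h
            · exact huS (by rw [h1]; exact hv2.1)
          have : s(u, v1) ∈ T.edgeSet := hC2T _ hmem2 hne12
          exact hv1.2.2 this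
        omega
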